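/- Fix N ≥ 1 and let λ denote Lebesgue measure on ℝ^N. Let A, B, Ω ⊆ ℝ^N be measurable sets with 0 < λ(A) < ∞, 0 < λ(B) < ∞, λ(Ω) < ∞ and A ⊆ Ω; let ρ : ℝ^N → [0,∞) be a measurable probability density with ρ ∈ L²(ℝ^N), and let F : A → ℝ^N be measurable satisfying the support condition: for every x ∈ A, ρ(y − F(x)) = 0 for almost every y ∉ B. If ∫_{ℝ^N} ρ(x)² dx ≤ κ / λ(Ω) for some 0 ≤ κ < 1, then the composition operator M : L²(B) → L²(A), (M v)(x) = ∫_B ρ(y − F(x)) v(y) dy, and the transfer operator N̂ : L²(A) → L²(B), (N̂ p)(y) = ∫_A ρ(y − F(x)) p(x) dx, both have squared operator norm at most κ; in particular they are contractions, and this condition is independent of the neural network weights. -/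

import Mathlib

open MeasureTheory

open ENNReal


lemma aux_rpow_sq (X : ℝ≥0∞) : (X ^ (1/2:ℝ)) ^ 2 = X := by
  rw [← ENNReal.rpow_natCast _ 2, ← ENNReal.rpow_mul]; norm_num

lemma aux_sq_rpow (x : ℝ≥0∞) : x ^ (2:ℝ) = x ^ 2 := by
  rw [← ENNReal.rpow_natCast x 2]; norm_num

lemma aux_kernel_bound {α β : Type*} [MeasurableSpace α] [MeasurableSpace β]
    {μ : Measure α} {ν : Measure β} [SigmaFinite ν]
    (r : α → β → ℝ) (hr : Measurable (Function.uncurry r)) (hrnn : ∀ a b, 0 ≤ r a b)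
    (κ : ℝ) (hκ0 : 0 ≤ κ)
    (hker : ∫⁻ a, ∫⁻ b, ENNReal.ofReal (r a b) ^ 2 ∂ν ∂μ ≤ ENNReal.ofReal κ)
    (u : Lp ℝ 2 ν) (w : Lp ℝ 2 μ)
    (hw : ∀ᵐ a ∂μ, w a = ∫ b, r a b * u b ∂ν) :
    ‖w‖ ≤ Real.sqrt κ * ‖u‖ := by
  set εu := eLpNorm (u : β → ℝ) 2 ν with hεu_def
  have hεu_top : εu ≠ ⊤ := (Lp.eLpNorm_lt_top u).ne
  have hεu : εu = ENNReal.ofReal ‖u‖ := by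
    rw [Lp.norm_def, ENNReal.ofReal_toReal hεu_top]
  have htwo : ((2:ℝ≥0∞)).toReal = (2:ℝ) := by norm_num
  have husq : ∫⁻ b, (‖u b‖₊ : ℝ≥0∞) ^ 2 ∂ν = εu ^ 2 := by
    rw [hεu_def, eLpNorm_eq_lintegral_rpow_enorm_toReal two_ne_zero ENNReal.ofNat_ne_top,
      htwo]
    simp only [aux_sq_rpow, aux_rpow_sq, enorm_eq_nnnorm]
  have key : ∀ a, (∫⁻ b, ENNReal.ofReal (r a b) * ‖u b‖₊ ∂ν) ^ 2
      ≤ (∫⁻ b, ENNReal.ofReal (r a b) ^ 2 ∂ν) * εu ^ 2 := by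
    intro a
    have hconj : Real.HolderConjugate 2 2 := by constructor <;> norm_num
    have hra : Measurable fun b => r a b := hr.of_uncurry_left
    have h := ENNReal.lintegral_mul_le_Lp_mul_Lq ν hconj
      (f := fun b => ENNReal.ofReal (r a b)) (g := fun b => (‖u b‖₊ : ℝ≥0∞))
      hra.ennreal_ofReal.aemeasurable
      (Lp.aestronglyMeasurable u).enorm
    calc (∫⁻ b, ENNReal.ofReal (r a b) * ‖u b‖₊ ∂ν) ^ 2
        ≤ ((∫⁻ b, ENNReal.ofReal (r a b) ^ (2:ℝ) ∂ν) ^ (1/(2:ℝ))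
            * (∫⁻ b, (‖u b‖₊ : ℝ≥0∞) ^ (2:ℝ) ∂ν) ^ (1/(2:ℝ))) ^ 2 :=
          pow_le_pow_left' h 2
      _ = (∫⁻ b, ENNReal.ofReal (r a b) ^ 2 ∂ν) * εu ^ 2 := by
          rw [mul_pow]
          simp only [aux_sq_rpow, aux_rpow_sq, husq]
  have hae : ∀ᵐ a ∂μ, (‖w a‖₊ : ℝ≥0∞) ^ 2
      ≤ (∫⁻ b, ENNReal.ofReal (r a b) ^ 2 ∂ν) * εu ^ 2 := by
    filter_upwards [hw] with a ha
    refine le_trans (pow_le_pow_left' ?_ 2) (key a)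
    rw [ha]
    refine le_trans (enorm_integral_le_lintegral_enorm _) (le_of_eq ?_)
    refine lintegral_congr fun b => ?_
    rw [enorm_mul, Real.enorm_eq_ofReal (hrnn a b), enorm_eq_nnnorm]
  have hint : ∫⁻ a, (‖w a‖₊ : ℝ≥0∞) ^ 2 ∂μ ≤ ENNReal.ofReal κ * εu ^ 2 := by
    calc ∫⁻ a, (‖w a‖₊ : ℝ≥0∞) ^ 2 ∂μ
        ≤ ∫⁻ a, (∫⁻ b, ENNReal.ofReal (r a b) ^ 2 ∂ν) * εu ^ 2 ∂μ :=
          lintegral_mono_ae hae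
      _ = (∫⁻ a, ∫⁻ b, ENNReal.ofReal (r a b) ^ 2 ∂ν ∂μ) * εu ^ 2 := by
          rw [lintegral_mul_const'']
          exact (Measurable.lintegral_prod_right'
            (f := fun q : α × β => ENNReal.ofReal (r q.1 q.2) ^ 2)
            ((hr.ennreal_ofReal).pow_const 2)).aemeasurable
      _ ≤ ENNReal.ofReal κ * εu ^ 2 := mul_le_mul_left hker _
  have hsnorm : eLpNorm (w : α → ℝ) 2 μ ≤ ENNReal.ofReal (Real.sqrt κ * ‖u‖) := by
    rw [eLpNorm_eq_lintegral_rpow_enorm_toReal two_ne_zero ENNReal.ofNat_ne_top, htwo]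
    simp only [aux_sq_rpow]
    calc (∫⁻ a, (‖w a‖₊ : ℝ≥0∞) ^ 2 ∂μ) ^ (1/(2:ℝ))
        ≤ (ENNReal.ofReal κ * εu ^ 2) ^ (1/(2:ℝ)) :=
          ENNReal.rpow_le_rpow hint (by norm_num)
      _ = ENNReal.ofReal (Real.sqrt κ * ‖u‖) := by
          rw [ENNReal.mul_rpow_of_nonneg _ _ (by norm_num), hεu,
            ENNReal.ofReal_mul (Real.sqrt_nonneg κ)]
          congr 1
          · rw [Real.sqrt_eq_rpow, ← ENNReal.ofReal_rpow_of_nonneg hκ0 (by norm_num)]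
          · rw [← ENNReal.rpow_natCast _ 2, ← ENNReal.rpow_mul]
            norm_num
  rw [Lp.norm_def]
  calc (eLpNorm (w : α → ℝ) 2 μ).toReal ≤ (ENNReal.ofReal (Real.sqrt κ * ‖u‖)).toReal :=
        ENNReal.toReal_mono ENNReal.ofReal_ne_top hsnorm
    _ ≤ Real.sqrt κ * ‖u‖ := le_of_eq (ENNReal.toReal_ofReal (mul_nonneg (Real.sqrt_nonneg κ) (norm_nonneg u)))

/-- **Random noise can induce contractions.** `ρ(y - F(x))` is the one-layer conditional
transition density of a stochastic neural network layer `X_{n+1} = F(X_n) + ξ_n` with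
noise density `ρ`; `A` is the range of `X_n`, `B` the range of `X_{n+1}`, and `Ω` a
weight-independent measurable set enclosing `A`. If `∫ ρ² ≤ κ/λ(Ω)` with `0 ≤ κ < 1`,
then the composition operator `M : L²(B) → L²(A)` and the transfer operator
`N̂ : L²(A) → L²(B)` both have squared operator norm at most `κ`; in particular they are
contractions, independently of the neural network weights. -/
theorem composition_transfer_operators_contraction
    (N : ℕ) (hN : 1 ≤ N)
    (A B : Set (Fin N → ℝ)) (hAmeas : MeasurableSet A) (hBmeas : MeasurableSet B)
    (hA0 : 0 < volume A) (hAfin : volume A < ⊤)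
    (hB0 : 0 < volume B) (hBfin : volume B < ⊤)
    (ρ : (Fin N → ℝ) → ℝ) (hρmeas : Measurable ρ) (hρnn : ∀ z, 0 ≤ ρ z)
    (hρint : ∫ z, ρ z = 1) (hρL2 : MemLp ρ 2 volume)
    (F : (Fin N → ℝ) → (Fin N → ℝ)) (hF : Measurable F)
    (hsupp : ∀ x ∈ A, ∀ᵐ y ∂volume, y ∉ B → ρ (y - F x) = 0)
    (Ω : Set (Fin N → ℝ)) (hΩmeas : MeasurableSet Ω) (hAΩ : A ⊆ Ω)
    (hΩfin : volume Ω < ⊤)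
    (κ : ℝ) (hκ0 : 0 ≤ κ) (hκ1 : κ < 1)
    (hρ2 : ∫ z, ρ z ^ 2 ≤ κ / (volume Ω).toReal)
    (M : Lp ℝ 2 (volume.restrict B) →L[ℝ] Lp ℝ 2 (volume.restrict A))
    (hM : ∀ v, ∀ᵐ x ∂volume.restrict A, M v x = ∫ y in B, ρ (y - F x) * v y)
    (T : Lp ℝ 2 (volume.restrict A) →L[ℝ] Lp ℝ 2 (volume.restrict B))
    (hT : ∀ p, ∀ᵐ y ∂volume.restrict B, T p y = ∫ x in A, ρ (y - F x) * p x) :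
    ‖M‖ ^ 2 ≤ κ ∧ ‖T‖ ^ 2 ≤ κ ∧ ‖M‖ < 1 ∧ ‖T‖ < 1 := by
  set t := (volume Ω).toReal with ht_def
  have hΩ0 : 0 < volume Ω := lt_of_lt_of_le hA0 (measure_mono hAΩ)
  have ht0 : 0 < t := ENNReal.toReal_pos hΩ0.ne' hΩfin.ne
  -- the squared L² mass of ρ
  have hI2 : ∫⁻ z, ENNReal.ofReal (ρ z) ^ 2 ≤ ENNReal.ofReal (κ / t) := by
    have h1 : ∫⁻ z, ENNReal.ofReal (ρ z) ^ 2 = ENNReal.ofReal (∫ z, ρ z ^ 2) := by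
      rw [ofReal_integral_eq_lintegral_ofReal hρL2.integrable_sq
        (Filter.Eventually.of_forall fun z => sq_nonneg (ρ z))]
      exact lintegral_congr fun z => (ENNReal.ofReal_pow (hρnn z) 2).symm
    rw [h1]
    exact ENNReal.ofReal_le_ofReal hρ2
  -- translation invariance
  have htrans : ∀ c, ∫⁻ y, ENNReal.ofReal (ρ (y - c)) ^ 2
      = ∫⁻ z, ENNReal.ofReal (ρ z) ^ 2 :=
    fun c => lintegral_sub_right_eq_self (fun z => ENNReal.ofReal (ρ z) ^ 2) c
  -- double integral bound (x over A outside, y over B inside)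
  have hdouble : ∫⁻ x in A, ∫⁻ y in B, ENNReal.ofReal (ρ (y - F x)) ^ 2
      ≤ ENNReal.ofReal κ := by
    calc ∫⁻ x in A, ∫⁻ y in B, ENNReal.ofReal (ρ (y - F x)) ^ 2
        ≤ ∫⁻ _ in A, ENNReal.ofReal (κ / t) := by
          refine lintegral_mono fun x => ?_
          calc ∫⁻ y in B, ENNReal.ofReal (ρ (y - F x)) ^ 2
              ≤ ∫⁻ y, ENNReal.ofReal (ρ (y - F x)) ^ 2 :=
                setLIntegral_le_lintegral _ _
            _ = ∫⁻ z, ENNReal.ofReal (ρ z) ^ 2 := htrans (F x)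
            _ ≤ ENNReal.ofReal (κ / t) := hI2
      _ = ENNReal.ofReal (κ / t) * volume A := by
          rw [setLIntegral_const]
      _ ≤ ENNReal.ofReal (κ / t) * volume Ω :=
          mul_le_mul_right (measure_mono hAΩ) _
      _ = ENNReal.ofReal κ := by
          rw [← ENNReal.ofReal_toReal hΩfin.ne, ← ht_def,
            ← ENNReal.ofReal_mul (by positivity), div_mul_cancel₀ κ ht0.ne']
  -- kernel measurability
  have hkmeas : Measurable (Function.uncurry fun x y => ρ (y - F x)) :=
    hρmeas.comp (measurable_snd.sub (hF.comp measurable_fst))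
  have hkmeas' : Measurable (Function.uncurry fun y x => ρ (y - F x)) :=
    hρmeas.comp (measurable_fst.sub (hF.comp measurable_snd))
  -- swapped double integral for T
  have hdouble' : ∫⁻ y in B, ∫⁻ x in A, ENNReal.ofReal (ρ (y - F x)) ^ 2
      ≤ ENNReal.ofReal κ := by
    rw [lintegral_lintegral_swap
      (((hkmeas'.ennreal_ofReal).pow_const 2).aemeasurable)]
    exact hdouble
  have hMb : ∀ v, ‖M v‖ ≤ Real.sqrt κ * ‖v‖ := fun v =>
    aux_kernel_bound (fun x y => ρ (y - F x)) hkmeas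
      (fun x y => hρnn _) κ hκ0 hdouble v (M v) (hM v)
  have hTb : ∀ p, ‖T p‖ ≤ Real.sqrt κ * ‖p‖ := fun p =>
    aux_kernel_bound (fun y x => ρ (y - F x)) hkmeas'
      (fun y x => hρnn _) κ hκ0 hdouble' p (T p) (hT p)
  have hMn : ‖M‖ ≤ Real.sqrt κ :=
    M.opNorm_le_bound (Real.sqrt_nonneg κ) hMb
  have hTn : ‖T‖ ≤ Real.sqrt κ :=
    T.opNorm_le_bound (Real.sqrt_nonneg κ) hTb
  have hs1 : Real.sqrt κ < 1 := by
    rw [show (1:ℝ) = Real.sqrt 1 from (Real.sqrt_one).symm]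
    exact Real.sqrt_lt_sqrt hκ0 hκ1
  refine ⟨?_, ?_, lt_of_le_of_lt hMn hs1, lt_of_le_of_lt hTn hs1⟩
  · calc ‖M‖ ^ 2 ≤ Real.sqrt κ ^ 2 := pow_le_pow_left₀ (norm_nonneg M) hMn 2
      _ = κ := Real.sq_sqrt hκ0
  · calc ‖T‖ ^ 2 ≤ Real.sqrt κ ^ 2 := pow_le_pow_left₀ (norm_nonneg T) hTn 2
      _ = κ := Real.sq_sqrt hκ0
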